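/- arXiv:2012.05639 — 2 statements merged into one kernel-verified Lean document; each statement's English description precedes it below -/
import Mathlib

section
/- Let n ≥ 1 and c ∈ Mat_n. Suppose f, h : ℂ → Mat_n are differentiable (with f twice differentiable) and satisfy f'(z) = −f(z)² − (z/2)·I − h(z) and h'(z) = 2 h(z) f(z) − 2c for all z. Then f satisfies the matrix Painlevé II equation P₂¹ with κ = −1: f''(z) = −[f(z), f'(z)] + 2 f(z)³ + z·f(z) + 2c − (1/2)·I for all z. -/
attribute [local instance] Matrix.normedAddCommGroup Matrix.normedSpace

/-- Matrix multiplication as a continuous bilinear map (finite dimensions). -/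
noncomputable def mulCLM (n : ℕ) :
    Matrix (Fin n) (Fin n) ℂ →L[ℂ] Matrix (Fin n) (Fin n) ℂ →L[ℂ] Matrix (Fin n) (Fin n) ℂ :=
  LinearMap.toContinuousLinearMap
    ((LinearMap.toContinuousLinearMap.toLinearMap) ∘ₗ
      (LinearMap.mul ℂ (Matrix (Fin n) (Fin n) ℂ)))

lemma mulCLM_apply (n : ℕ) (a b : Matrix (Fin n) (Fin n) ℂ) :
    mulCLM n a b = a * b := rfl

lemma sq_hasDerivAt (n : ℕ) (f : ℂ → Matrix (Fin n) (Fin n) ℂ) (z : ℂ)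
    (hf : Differentiable ℂ f) :
    HasDerivAt (fun w => f w * f w) (deriv f z * f z + f z * deriv f z) z := by
  have hfz := (hf z).hasDerivAt
  have he : ∀ i k, HasDerivAt (fun w => f w i k) (deriv f z i k) z := fun i k =>
    hasDerivAt_pi.1 (hasDerivAt_pi.1 hfz i) k
  refine hasDerivAt_pi.2 fun i => hasDerivAt_pi.2 fun j => ?_
  simp only [Matrix.mul_apply, Matrix.add_apply]
  rw [← Finset.sum_add_distrib]
  exact HasDerivAt.fun_sum fun k _ => (he i k).fun_mul (he k j)

/-- if `f' = −f² − z/2 − h` and `h' = 2hf − 2c`, then `f` satisfies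
the matrix Painlevé II equation P₂¹ with `κ = −1`:
`f'' = −[f, f'] + 2f³ + z f + 2c − (1/2) I`. -/
theorem fh_system_gives_P21 (n : ℕ) (hn : 1 ≤ n)
    (c : Matrix (Fin n) (Fin n) ℂ)
    (f h : ℂ → Matrix (Fin n) (Fin n) ℂ)
    (hf : Differentiable ℂ f) (hf' : Differentiable ℂ (deriv f))
    (hh : Differentiable ℂ h)
    (hfeq : ∀ z : ℂ, deriv f z =
      -(f z) ^ 2 - (z/2) • (1 : Matrix (Fin n) (Fin n) ℂ) - h z)
    (hheq : ∀ z : ℂ, deriv h z = 2 * (h z * f z) - 2 * c) :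
    ∀ z : ℂ, deriv (deriv f) z =
      -(f z * deriv f z - deriv f z * f z) + (2 : ℂ) • (f z) ^ 3 + z • f z
        + 2 * c - (1/2 : ℂ) • (1 : Matrix (Fin n) (Fin n) ℂ) := by
  intro z
  -- derivative of the RHS of the first equation
  have hsq := sq_hasDerivAt n f z hf
  have hlin : HasDerivAt (fun w : ℂ => (w/2) • (1 : Matrix (Fin n) (Fin n) ℂ))
      ((1/2 : ℂ) • (1 : Matrix (Fin n) (Fin n) ℂ)) z := by
    have : HasDerivAt (fun w : ℂ => w / 2) (1/2 : ℂ) z := by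
      simpa using (hasDerivAt_id z).div_const 2
    exact this.smul_const _
  have h1 : HasDerivAt (fun w => -(f w) ^ 2 - (w/2) • (1 : Matrix (Fin n) (Fin n) ℂ) - h w)
      (-(deriv f z * f z + f z * deriv f z) -
        (1/2 : ℂ) • (1 : Matrix (Fin n) (Fin n) ℂ) - deriv h z) z := by
    have := ((hsq.neg.sub hlin).sub (hh z).hasDerivAt)
    simp only [pow_two]
    exact this
  have hfun : deriv f = fun w => -(f w) ^ 2 - (w/2) • (1 : Matrix (Fin n) (Fin n) ℂ) - h w :=
    funext hfeq
  have hD : deriv (deriv f) z =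
      -(deriv f z * f z + f z * deriv f z) -
        (1/2 : ℂ) • (1 : Matrix (Fin n) (Fin n) ℂ) - deriv h z := by
    conv_lhs => rw [hfun]
    exact h1.deriv
  rw [hD, hheq z, hfeq z]
  simp only [pow_two, pow_succ, pow_zero, one_mul, mul_assoc, mul_sub, sub_mul, mul_add,
    add_mul, neg_mul, mul_neg, smul_mul_assoc, mul_smul_comm, one_mul, Matrix.one_mul,
    Matrix.mul_one, two_mul, neg_sub, neg_add, neg_neg, sub_eq_add_neg]
  module
end

section
/- Let n ≥ 1 and let a, b ∈ Mat_n satisfy [b, a] = −2b. Suppose y : ℂ → Mat_n is three times differentiable and satisfies the matrix Painlevé II equation P₂² with κ = −2: y''(z) = −2[y(z), y'(z)] + 2 y(z)³ + z·y(z) + b·y(z) + y(z)·b + a for all z. Then y satisfies the third-order reduced equation: y'''(z) = 3[y''(z), y(z)] + 6 y(z) y'(z) y(z) + y(z) + z·y'(z) + (y'(z) + y(z)²)·b + b·(y'(z) − y(z)²) + [y(z), a] for all z. (This is the self-similar reduction y''' = 3[y'',y] + 6yy'y + y + z y' + 3(y' + y²)c₀ + 3c₀(y' − y²) + [d,y]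 with 3c₀ = b and d = −a.) -/
attribute [local instance] Matrix.normedAddCommGroup Matrix.normedSpace

noncomputable def matMulCLM (n : ℕ) :
    Matrix (Fin n) (Fin n) ℂ →L[ℂ] Matrix (Fin n) (Fin n) ℂ →L[ℂ] Matrix (Fin n) (Fin n) ℂ :=
  LinearMap.toContinuousLinearMap <|
    (LinearMap.toContinuousLinearMap :
        (Matrix (Fin n) (Fin n) ℂ →ₗ[ℂ] Matrix (Fin n) (Fin n) ℂ) ≃ₗ[ℂ]
        (Matrix (Fin n) (Fin n) ℂ →L[ℂ] Matrix (Fin n) (Fin n) ℂ)).toLinearMap ∘ₗ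
      LinearMap.mul ℂ (Matrix (Fin n) (Fin n) ℂ)

@[simp] lemma matMulCLM_apply (n : ℕ) (x y : Matrix (Fin n) (Fin n) ℂ) :
    matMulCLM n x y = x * y := by
  simp [matMulCLM]

lemma hasDerivAt_matmul {n : ℕ} {u v : ℂ → Matrix (Fin n) (Fin n) ℂ}
    {u' v' : Matrix (Fin n) (Fin n) ℂ} {z : ℂ}
    (hu : HasDerivAt u u' z) (hv : HasDerivAt v v' z) :
    HasDerivAt (fun w => u w * v w) (u z * v' + u' * v z) z := by
  exact (matMulCLM n).hasDerivAt_of_bilinear (fun _ => hu) (fun _ => hv)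

/-- every solution of the matrix Painlevé II equation P₂² with
`κ = −2` and `[b, a] = −2b` satisfies the self-similar reduction of the matrix
mKdV-type equation:
`y''' = 3[y'', y] + 6yy'y + y + z y' + (y' + y²)b + b(y' − y²) + [y, a]`. -/
theorem matrixP22_satisfies_mkdv_reduction (n : ℕ) (hn : 1 ≤ n)
    (a b : Matrix (Fin n) (Fin n) ℂ)
    (hba : b * a - a * b = -(2 * b))
    (y : ℂ → Matrix (Fin n) (Fin n) ℂ)
    (hy : Differentiable ℂ y) (hy' : Differentiable ℂ (deriv y))
    (hy'' : Differentiable ℂ (deriv (deriv y)))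
    (heq : ∀ z : ℂ, deriv (deriv y) z =
      -((2 : ℂ) • (y z * deriv y z - deriv y z * y z)) + (2 : ℂ) • (y z) ^ 3
        + z • y z + b * y z + y z * b + a) :
    ∀ z : ℂ, deriv (deriv (deriv y)) z =
      3 * (deriv (deriv y) z * y z - y z * deriv (deriv y) z)
        + 6 * (y z * deriv y z * y z) + y z + z • deriv y z
        + (deriv y z + (y z)^2) * b + b * (deriv y z - (y z)^2)
        + (y z * a - a * y z) := by
  intro z
  have hYz : ∀ w, HasDerivAt y (deriv y w) w := fun w => (hy w).hasDerivAt
  have hY'z : ∀ w, HasDerivAt (deriv y) (deriv (deriv y) w) w := fun w => (hy' w).hasDerivAt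
  have hfun : deriv (deriv y) = fun w =>
      -((2:ℂ) • (y w * deriv y w - deriv y w * y w)) + (2:ℂ) • (y w * y w * y w)
        + w • y w + b * y w + y w * b + a := by
    funext w
    rw [heq w]
    simp [pow_succ, pow_one]
  have key0 : HasDerivAt (fun w =>
      -((2:ℂ) • (y w * deriv y w - deriv y w * y w)) + (2:ℂ) • (y w * y w * y w)
        + w • y w + b * y w + y w * b + a)
      (-( (2:ℂ) • ((y z * deriv (deriv y) z + deriv y z * deriv y z)
            - (deriv y z * deriv y z + deriv (deriv y) z * y z)))
        + (2:ℂ) • (y z * y z * deriv y z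
            + (y z * deriv y z + deriv y z * y z) * y z)
        + (z • deriv y z + (1:ℂ) • y z)
        + (b * deriv y z + 0 * y z) + (y z * 0 + deriv y z * b)) z :=
    (((((((hasDerivAt_matmul (hYz z) (hY'z z)).sub
        (hasDerivAt_matmul (hY'z z) (hYz z))).const_smul (2:ℂ)).neg.add
      ((hasDerivAt_matmul (hasDerivAt_matmul (hYz z) (hYz z)) (hYz z)).const_smul (2:ℂ))).add
      ((hasDerivAt_id z).smul (hYz z))).add
      (hasDerivAt_matmul (hasDerivAt_const z b) (hYz z))).add
      (hasDerivAt_matmul (hYz z) (hasDerivAt_const z b))).add_const a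
  have key : HasDerivAt (deriv (deriv y))
      (-( (2:ℂ) • ((y z * deriv (deriv y) z + deriv y z * deriv y z)
            - (deriv y z * deriv y z + deriv (deriv y) z * y z)))
        + (2:ℂ) • (y z * y z * deriv y z
            + (y z * deriv y z + deriv y z * y z) * y z)
        + (z • deriv y z + (1:ℂ) • y z)
        + (b * deriv y z + 0 * y z) + (y z * 0 + deriv y z * b)) z := by
    nth_rewrite 1 [hfun]
    exact key0
  rw [show deriv (deriv (deriv y)) z = _ from key.deriv, heq z]
  have e3 : (3 : Matrix (Fin n) (Fin n) ℂ) = 1 + 1 + 1 := by norm_num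
  have e6 : (6 : Matrix (Fin n) (Fin n) ℂ) = 1 + 1 + 1 + 1 + 1 + 1 := by norm_num
  rw [e3, e6]
  simp only [two_smul, smul_sub, smul_add, sub_mul, mul_sub, add_mul, mul_add, one_mul,
    smul_mul_assoc, mul_smul_comm, neg_mul, mul_neg, neg_add, neg_sub, neg_neg,
    sub_eq_add_neg, pow_two, pow_succ, pow_zero, pow_one, mul_assoc, one_smul,
    zero_mul, mul_zero, add_zero, zero_add]
  abel
end
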